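/- Let X₁ be an n×L₁ indicator matrix, X₂ an n×L₂ indicator matrix with L₁, L₂ ≥ 1, X₁:₂ = X₁ * X₂, Y ∈ ℝⁿ, and λ > 0. Consider (A) the unconstrained group-lasso problem: minimize over (μ, β₁, β₂, β₁:₂) ∈ ℝ × ℝ^{L₁} × ℝ^{L₂} × ℝ^{L₁L₂} the objective (1/2)‖Y − μ·1 − X₁β₁ − X₂β₂ − X₁:₂β₁:₂‖₂² + λ(‖β₁‖₂ + ‖β₂‖₂ + ‖β₁:₂‖₂); and (B) the constrained overlapped group-lasso problem: minimize over (μ, α₁, α₂, α̃₁, α̃₂, α₁:₂) the objective (1/2)‖Y − μ·1 − X₁α₁ − X₂α₂ − X₁α̃₁ − X₂α̃₂ − X₁:₂α₁:₂‖₂² + λ(‖α₁‖₂ + ‖α₂‖₂ + √(L₂‖α̃₁‖₂² + L₁‖α̃₂‖₂² + ‖α₁:₂‖₂²)) subject to ∑ᵢ α₁ⁱ = 0, ∑ⱼ α₂ʲ = 0, ∑ᵢ α̃₁ⁱ = 0, ∑ⱼ α̃₂ʲ = 0, ∑ᵢ α₁:₂ⁱʲ = 0 for every fixed j, and ∑ⱼ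 α₁:₂ⁱʲ = 0 for every fixed i. Then the two problems are equivalent: their infima are equal, and the map (μ, α₁, α₂, α̃₁, α̃₂, α₁:₂) ↦ (μ, α₁, α₂, Z₁α̃₁ + Z₂α̃₂ + α₁:₂) sends minimizers of (B) to minimizers of (A), and every minimizer of (A) arises in this way from a minimizer of (B). -/

import Mathlib

open scoped BigOperators

noncomputable section

/-- Euclidean norm of a finitely indexed vector. -/
def norm2 {m : Type*} [Fintype m] (v : m → ℝ) : ℝ := Real.sqrt (∑ i, v i ^ 2)

/-- The interaction matrix `X₁:₂ = X₁ * X₂`: its column indexed by `(i,j)` is the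
entrywise product of column `i` of `X₁` with column `j` of `X₂`. -/
def interact {n L₁ L₂ : ℕ} (X₁ : Matrix (Fin n) (Fin L₁) ℝ)
    (X₂ : Matrix (Fin n) (Fin L₂) ℝ) : Matrix (Fin n) (Fin L₁ × Fin L₂) ℝ :=
  fun k q => X₁ k q.1 * X₂ k q.2

/-- `Z₁`: the `(L₁L₂)×L₁` matrix whose row indexed by `(i,j)` has a `1` in column `i`. -/
def Zmat1 (L₁ L₂ : ℕ) : Matrix (Fin L₁ × Fin L₂) (Fin L₁) ℝ :=
  fun q i => if q.1 = i then 1 else 0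

/-- `Z₂`: the `(L₁L₂)×L₂` matrix whose row indexed by `(i,j)` has a `1` in column `j`. -/
def Zmat2 (L₁ L₂ : ℕ) : Matrix (Fin L₁ × Fin L₂) (Fin L₂) ℝ :=
  fun q j => if q.2 = j then 1 else 0

/-- Objective of the unconstrained group-lasso problem (A). -/
def objA {n L₁ L₂ : ℕ} (X₁ : Matrix (Fin n) (Fin L₁) ℝ)
    (X₂ : Matrix (Fin n) (Fin L₂) ℝ) (Y : Fin n → ℝ) (lam : ℝ)
    (p : ℝ × (Fin L₁ → ℝ) × (Fin L₂ → ℝ) × (Fin L₁ × Fin L₂ → ℝ)) : ℝ :=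
  (1 / 2) * (∑ k, (Y k - p.1 - X₁.mulVec p.2.1 k - X₂.mulVec p.2.2.1 k
      - (interact X₁ X₂).mulVec p.2.2.2 k) ^ 2)
    + lam * (norm2 p.2.1 + norm2 p.2.2.1 + norm2 p.2.2.2)

/-- Objective of the constrained overlapped group-lasso problem (B). -/
def objB {n L₁ L₂ : ℕ} (X₁ : Matrix (Fin n) (Fin L₁) ℝ)
    (X₂ : Matrix (Fin n) (Fin L₂) ℝ) (Y : Fin n → ℝ) (lam : ℝ)
    (q : ℝ × (Fin L₁ → ℝ) × (Fin L₂ → ℝ) × (Fin L₁ → ℝ) × (Fin L₂ → ℝ)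
      × (Fin L₁ × Fin L₂ → ℝ)) : ℝ :=
  (1 / 2) * (∑ k, (Y k - q.1 - X₁.mulVec q.2.1 k - X₂.mulVec q.2.2.1 k
      - X₁.mulVec q.2.2.2.1 k - X₂.mulVec q.2.2.2.2.1 k
      - (interact X₁ X₂).mulVec q.2.2.2.2.2 k) ^ 2)
    + lam * (norm2 q.2.1 + norm2 q.2.2.1
      + Real.sqrt ((L₂ : ℝ) * ∑ i, q.2.2.2.1 i ^ 2 + (L₁ : ℝ) * ∑ j, q.2.2.2.2.1 j ^ 2
          + ∑ r, q.2.2.2.2.2 r ^ 2))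

/-- Zero-sum constraints for problem (B). -/
def constraintsB {L₁ L₂ : ℕ}
    (q : ℝ × (Fin L₁ → ℝ) × (Fin L₂ → ℝ) × (Fin L₁ → ℝ) × (Fin L₂ → ℝ)
      × (Fin L₁ × Fin L₂ → ℝ)) : Prop :=
  (∑ i, q.2.1 i = 0) ∧ (∑ j, q.2.2.1 j = 0) ∧ (∑ i, q.2.2.2.1 i = 0) ∧
    (∑ j, q.2.2.2.2.1 j = 0) ∧ (∀ j, ∑ i, q.2.2.2.2.2 (i, j) = 0) ∧
    (∀ i, ∑ j, q.2.2.2.2.2 (i, j) = 0)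

/-- The map from problem-(B) variables to problem-(A) variables:
`(μ, α₁, α₂, α̃₁, α̃₂, α₁:₂) ↦ (μ, α₁, α₂, Z₁α̃₁ + Z₂α̃₂ + α₁:₂)`. -/
def toA {L₁ L₂ : ℕ}
    (q : ℝ × (Fin L₁ → ℝ) × (Fin L₂ → ℝ) × (Fin L₁ → ℝ) × (Fin L₂ → ℝ)
      × (Fin L₁ × Fin L₂ → ℝ)) :
    ℝ × (Fin L₁ → ℝ) × (Fin L₂ → ℝ) × (Fin L₁ × Fin L₂ → ℝ) :=
  (q.1, q.2.1, q.2.2.1,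
    fun r => (Zmat1 L₁ L₂).mulVec q.2.2.2.1 r + (Zmat2 L₁ L₂).mulVec q.2.2.2.2.1 r
      + q.2.2.2.2.2 r)

lemma sum_sq_orth1 {L : ℕ} (m : ℝ) (a : Fin L → ℝ) (ha : ∑ i, a i = 0) :
    ∑ i, (m + a i) ^ 2 = (L : ℝ) * m ^ 2 + ∑ i, a i ^ 2 := by
  have h : ∀ i, (m + a i) ^ 2 = m ^ 2 + 2 * m * a i + a i ^ 2 := fun i => by ring
  simp only [h, Finset.sum_add_distrib, ← Finset.mul_sum, ha, Finset.sum_const,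
    Finset.card_univ, Fintype.card_fin, nsmul_eq_mul]
  ring

lemma sum_sq_orth {L₁ L₂ : ℕ} (m : ℝ) (a : Fin L₁ → ℝ) (b : Fin L₂ → ℝ)
    (c : Fin L₁ × Fin L₂ → ℝ)
    (ha : ∑ i, a i = 0) (hb : ∑ j, b j = 0)
    (hcr : ∀ i, ∑ j, c (i, j) = 0) (hcc : ∀ j, ∑ i, c (i, j) = 0) :
    ∑ r : Fin L₁ × Fin L₂, (m + a r.1 + b r.2 + c r) ^ 2
      = (L₁ : ℝ) * (L₂ : ℝ) * m ^ 2 + (L₂ : ℝ) * ∑ i, a i ^ 2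
        + (L₁ : ℝ) * ∑ j, b j ^ 2 + ∑ r : Fin L₁ × Fin L₂, c r ^ 2 := by
  rw [Fintype.sum_prod_type]
  have inner : ∀ i, ∑ j, (m + a i + b j + c (i, j)) ^ 2
      = (L₂ : ℝ) * (m + a i) ^ 2 + ∑ j, b j ^ 2 + ∑ j, c (i, j) ^ 2
        + 2 * ∑ j, b j * c (i, j) := by
    intro i
    have h : ∀ j, (m + a i + b j + c (i, j)) ^ 2
        = (m + a i) ^ 2 + b j ^ 2 + c (i, j) ^ 2 + 2 * (b j * c (i, j))
          + 2 * (m + a i) * b j + 2 * (m + a i) * c (i, j) := fun j => by ring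
    simp only [h, Finset.sum_add_distrib, ← Finset.mul_sum, hb, hcr i, Finset.sum_const,
      Finset.card_univ, Fintype.card_fin, nsmul_eq_mul]
    ring
  simp only [inner, Finset.sum_add_distrib, ← Finset.mul_sum]
  have h1 : ∑ i, (m + a i) ^ 2 = (L₁ : ℝ) * m ^ 2 + ∑ i, a i ^ 2 := sum_sq_orth1 m a ha
  have h2 : ∑ i, ∑ j, b j * c (i, j) = 0 := by
    rw [Finset.sum_comm]
    have : ∀ j, ∑ i, b j * c (i, j) = 0 := by
      intro j; rw [← Finset.mul_sum, hcc j, mul_zero]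
    simp [this]
  have h3 : ∑ i, ∑ j, c (i, j) ^ 2 = ∑ r : Fin L₁ × Fin L₂, c r ^ 2 := by
    rw [Fintype.sum_prod_type]
  simp only [Finset.sum_const, Finset.card_univ, Fintype.card_fin, nsmul_eq_mul]
  rw [h1, h2, h3]
  ring
lemma mulVec_ind {n L : ℕ} {X : Matrix (Fin n) (Fin L) ℝ} {k : Fin n} {i : Fin L}
    (h : ∀ j, X k j = if j = i then (1 : ℝ) else 0) (v : Fin L → ℝ) :
    X.mulVec v k = v i := by
  simp [Matrix.mulVec, dotProduct, h, ite_mul, Finset.sum_ite_eq']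

lemma mulVec_interact {n L₁ L₂ : ℕ} {X₁ : Matrix (Fin n) (Fin L₁) ℝ}
    {X₂ : Matrix (Fin n) (Fin L₂) ℝ} {k : Fin n} {i : Fin L₁} {j : Fin L₂}
    (h₁ : ∀ i', X₁ k i' = if i' = i then (1 : ℝ) else 0)
    (h₂ : ∀ j', X₂ k j' = if j' = j then (1 : ℝ) else 0)
    (v : Fin L₁ × Fin L₂ → ℝ) :
    (interact X₁ X₂).mulVec v k = v (i, j) := by
  simp only [Matrix.mulVec, dotProduct, interact, h₁, h₂]
  rw [Fintype.sum_prod_type]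
  simp [ite_mul, Finset.sum_ite_eq']

lemma Zmat1_mulVec {L₁ L₂ : ℕ} (a : Fin L₁ → ℝ) (r : Fin L₁ × Fin L₂) :
    (Zmat1 L₁ L₂).mulVec a r = a r.1 := by
  simp [Zmat1, Matrix.mulVec, dotProduct, ite_mul, Finset.sum_ite_eq]

lemma Zmat2_mulVec {L₁ L₂ : ℕ} (b : Fin L₂ → ℝ) (r : Fin L₁ × Fin L₂) :
    (Zmat2 L₁ L₂).mulVec b r = b r.2 := by
  simp [Zmat2, Matrix.mulVec, dotProduct, ite_mul, Finset.sum_ite_eq]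

lemma objA_toA_eq {n L₁ L₂ : ℕ}
    (X₁ : Matrix (Fin n) (Fin L₁) ℝ)
    (hX₁ : ∀ k : Fin n, ∃ i : Fin L₁, ∀ j : Fin L₁, X₁ k j = if j = i then (1 : ℝ) else 0)
    (X₂ : Matrix (Fin n) (Fin L₂) ℝ)
    (hX₂ : ∀ k : Fin n, ∃ i : Fin L₂, ∀ j : Fin L₂, X₂ k j = if j = i then (1 : ℝ) else 0)
    (Y : Fin n → ℝ) (lam : ℝ)
    (q : ℝ × (Fin L₁ → ℝ) × (Fin L₂ → ℝ) × (Fin L₁ → ℝ) × (Fin L₂ → ℝ)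
      × (Fin L₁ × Fin L₂ → ℝ)) (hq : constraintsB q) :
    objA X₁ X₂ Y lam (toA q) = objB X₁ X₂ Y lam q := by
  obtain ⟨μ, α₁, α₂, ta, tb, α⟩ := q
  obtain ⟨h1, h2, h3, h4, h5, h6⟩ := hq
  unfold objA objB toA
  simp only
  congr 1
  · -- loss terms
    congr 1
    apply Finset.sum_congr rfl
    intro k _
    obtain ⟨i, hi⟩ := hX₁ k
    obtain ⟨j, hj⟩ := hX₂ k
    rw [mulVec_interact hi hj, mulVec_interact hi hj, mulVec_ind hi, mulVec_ind hi,
      mulVec_ind hj, mulVec_ind hj, Zmat1_mulVec, Zmat2_mulVec]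
    ring
  · -- penalty terms
    congr 2
    unfold norm2
    congr 1
    have : ∀ r : Fin L₁ × Fin L₂,
        ((Zmat1 L₁ L₂).mulVec ta r + (Zmat2 L₁ L₂).mulVec tb r + α r) ^ 2
          = (0 + ta r.1 + tb r.2 + α r) ^ 2 := by
      intro r; rw [Zmat1_mulVec, Zmat2_mulVec]; ring
    rw [Finset.sum_congr rfl fun r _ => this r, sum_sq_orth 0 ta tb α h3 h4 h6 h5]
    ring

set_option maxHeartbeats 1000000 in
lemma exists_decomp {n L₁ L₂ : ℕ} (hL₁ : 0 < L₁) (hL₂ : 0 < L₂)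
    (X₁ : Matrix (Fin n) (Fin L₁) ℝ)
    (hX₁ : ∀ k : Fin n, ∃ i : Fin L₁, ∀ j : Fin L₁, X₁ k j = if j = i then (1 : ℝ) else 0)
    (X₂ : Matrix (Fin n) (Fin L₂) ℝ)
    (hX₂ : ∀ k : Fin n, ∃ i : Fin L₂, ∀ j : Fin L₂, X₂ k j = if j = i then (1 : ℝ) else 0)
    (Y : Fin n → ℝ) (lam : ℝ) (hlam : 0 < lam)
    (p : ℝ × (Fin L₁ → ℝ) × (Fin L₂ → ℝ) × (Fin L₁ × Fin L₂ → ℝ)) :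
    ∃ q, constraintsB q ∧ objB X₁ X₂ Y lam q ≤ objA X₁ X₂ Y lam p ∧
      (objA X₁ X₂ Y lam p ≤ objB X₁ X₂ Y lam q → toA q = p) := by
  obtain ⟨μ, β₁, β₂, β⟩ := p
  have e₁ : (L₁ : ℝ) ≠ 0 := Nat.cast_ne_zero.mpr hL₁.ne'
  have e₂ : (L₂ : ℝ) ≠ 0 := Nat.cast_ne_zero.mpr hL₂.ne'
  set m₁ : ℝ := (∑ i, β₁ i) / L₁ with hm₁def
  set m₂ : ℝ := (∑ j, β₂ j) / L₂ with hm₂def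
  set m : ℝ := (∑ r, β r) / (L₁ * L₂) with hmdef
  set α₁ : Fin L₁ → ℝ := fun i => β₁ i - m₁ with hα₁
  set α₂ : Fin L₂ → ℝ := fun j => β₂ j - m₂ with hα₂
  set a : Fin L₁ → ℝ := fun i => (∑ j, β (i, j)) / L₂ - m with hadef
  set b : Fin L₂ → ℝ := fun j => (∑ i, β (i, j)) / L₁ - m with hbdef
  set c : Fin L₁ × Fin L₂ → ℝ := fun r => β r - m - a r.1 - b r.2 with hcdef
  have hS1 : ∑ i, ∑ j, β (i, j) = ∑ r, β r := (Fintype.sum_prod_type _).symm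
  have hS2 : ∑ j, ∑ i, β (i, j) = ∑ r, β r := (Fintype.sum_prod_type_right _).symm
  -- constraints
  have hs₁ : ∑ i, α₁ i = 0 := by
    simp only [hα₁, Finset.sum_sub_distrib, Finset.sum_const, Finset.card_univ,
      Fintype.card_fin, nsmul_eq_mul, hm₁def]
    field_simp
    ring
  have hs₂ : ∑ j, α₂ j = 0 := by
    simp only [hα₂, Finset.sum_sub_distrib, Finset.sum_const, Finset.card_univ,
      Fintype.card_fin, nsmul_eq_mul, hm₂def]
    field_simp
    ring
  have ha0 : ∑ i, a i = 0 := by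
    simp only [hadef, Finset.sum_sub_distrib, Finset.sum_const, Finset.card_univ,
      Fintype.card_fin, nsmul_eq_mul, ← Finset.sum_div, hS1, hmdef]
    field_simp
    ring
  have hb0 : ∑ j, b j = 0 := by
    simp only [hbdef, Finset.sum_sub_distrib, Finset.sum_const, Finset.card_univ,
      Fintype.card_fin, nsmul_eq_mul, ← Finset.sum_div, hS2, hmdef]
    field_simp
    ring
  have hcr : ∀ i, ∑ j, c (i, j) = 0 := by
    intro i
    have h1 : ∑ j, c (i, j)
        = (∑ j, β (i, j)) - (L₂ : ℝ) * m - (L₂ : ℝ) * a i - ∑ j, b j := by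
      simp only [hcdef, Finset.sum_sub_distrib, Finset.sum_const, Finset.card_univ,
        Fintype.card_fin, nsmul_eq_mul]
    rw [h1, hb0]
    simp only [hadef]
    field_simp
    ring
  have hcc : ∀ j, ∑ i, c (i, j) = 0 := by
    intro j
    have h1 : ∑ i, c (i, j)
        = (∑ i, β (i, j)) - (L₁ : ℝ) * m - (∑ i, a i) - (L₁ : ℝ) * b j := by
      simp only [hcdef, Finset.sum_sub_distrib, Finset.sum_const, Finset.card_univ,
        Fintype.card_fin, nsmul_eq_mul]
    rw [h1, ha0]
    simp only [hbdef]
    field_simp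
    ring
  -- fit equality
  have hfit : ∀ k, Y k - (μ + m₁ + m₂ + m) - X₁.mulVec α₁ k - X₂.mulVec α₂ k
      - X₁.mulVec a k - X₂.mulVec b k - (interact X₁ X₂).mulVec c k
      = Y k - μ - X₁.mulVec β₁ k - X₂.mulVec β₂ k - (interact X₁ X₂).mulVec β k := by
    intro k
    obtain ⟨i, hi⟩ := hX₁ k
    obtain ⟨j, hj⟩ := hX₂ k
    rw [mulVec_ind hi, mulVec_ind hi, mulVec_ind hi, mulVec_ind hj, mulVec_ind hj,
      mulVec_ind hj, mulVec_interact hi hj, mulVec_interact hi hj]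
    simp only [hα₁, hα₂, hcdef]
    ring
  -- squared-norm decompositions
  have hβ₁sq : ∑ i, β₁ i ^ 2 = (L₁ : ℝ) * m₁ ^ 2 + ∑ i, α₁ i ^ 2 := by
    have h : ∀ i, β₁ i = m₁ + α₁ i := by intro i; simp only [hα₁]; ring
    rw [Finset.sum_congr rfl (fun i _ => by rw [h i]), sum_sq_orth1 m₁ α₁ hs₁]
  have hβ₂sq : ∑ j, β₂ j ^ 2 = (L₂ : ℝ) * m₂ ^ 2 + ∑ j, α₂ j ^ 2 := by
    have h : ∀ j, β₂ j = m₂ + α₂ j := by intro j; simp only [hα₂]; ring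
    rw [Finset.sum_congr rfl (fun j _ => by rw [h j]), sum_sq_orth1 m₂ α₂ hs₂]
  have hβsq : ∑ r, β r ^ 2 = (L₁ : ℝ) * (L₂ : ℝ) * m ^ 2
      + ((L₂ : ℝ) * ∑ i, a i ^ 2 + (L₁ : ℝ) * ∑ j, b j ^ 2 + ∑ r, c r ^ 2) := by
    have h : ∀ r : Fin L₁ × Fin L₂, β r = m + a r.1 + b r.2 + c r := by
      intro r; simp only [hcdef]; ring
    rw [Finset.sum_congr rfl (fun r _ => by rw [h r]), sum_sq_orth m a b c ha0 hb0 hcr hcc]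
    ring
  have L₁pos : (0:ℝ) < (L₁:ℝ) := by exact_mod_cast hL₁
  have L₂pos : (0:ℝ) < (L₂:ℝ) := by exact_mod_cast hL₂
  have nn₁ : (0:ℝ) ≤ ∑ i, α₁ i ^ 2 := Finset.sum_nonneg fun i _ => sq_nonneg _
  have nn₂ : (0:ℝ) ≤ ∑ j, α₂ j ^ 2 := Finset.sum_nonneg fun j _ => sq_nonneg _
  have nna : (0:ℝ) ≤ ∑ i, a i ^ 2 := Finset.sum_nonneg fun i _ => sq_nonneg _
  have nnb : (0:ℝ) ≤ ∑ j, b j ^ 2 := Finset.sum_nonneg fun j _ => sq_nonneg _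
  have nnc : (0:ℝ) ≤ ∑ r, c r ^ 2 := Finset.sum_nonneg fun r _ => sq_nonneg _
  have nn₃ : (0:ℝ) ≤ (L₂ : ℝ) * ∑ i, a i ^ 2 + (L₁ : ℝ) * ∑ j, b j ^ 2 + ∑ r, c r ^ 2 := by
    nlinarith
  have hp₁ : norm2 α₁ ≤ norm2 β₁ := by
    apply Real.sqrt_le_sqrt
    rw [hβ₁sq]; nlinarith [sq_nonneg m₁]
  have hp₂ : norm2 α₂ ≤ norm2 β₂ := by
    apply Real.sqrt_le_sqrt
    rw [hβ₂sq]; nlinarith [sq_nonneg m₂]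
  have hp₃ : Real.sqrt ((L₂ : ℝ) * ∑ i, a i ^ 2 + (L₁ : ℝ) * ∑ j, b j ^ 2 + ∑ r, c r ^ 2)
      ≤ norm2 β := by
    apply Real.sqrt_le_sqrt
    rw [hβsq]; nlinarith [mul_nonneg (mul_nonneg L₁pos.le L₂pos.le) (sq_nonneg m)]
  have hpen : norm2 α₁ + norm2 α₂
      + Real.sqrt ((L₂:ℝ) * ∑ i, a i ^ 2 + (L₁:ℝ) * ∑ j, b j ^ 2 + ∑ r, c r ^ 2)
      ≤ norm2 β₁ + norm2 β₂ + norm2 β := add_le_add (add_le_add hp₁ hp₂) hp₃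
  have hlossAB : ∑ k, (Y k - (μ + m₁ + m₂ + m) - X₁.mulVec α₁ k - X₂.mulVec α₂ k
      - X₁.mulVec a k - X₂.mulVec b k - (interact X₁ X₂).mulVec c k) ^ 2
      = ∑ k, (Y k - μ - X₁.mulVec β₁ k - X₂.mulVec β₂ k
        - (interact X₁ X₂).mulVec β k) ^ 2 :=
    Finset.sum_congr rfl (fun k _ => by rw [hfit k])
  have hle : objB X₁ X₂ Y lam (μ + m₁ + m₂ + m, α₁, α₂, a, b, c)
      ≤ objA X₁ X₂ Y lam (μ, β₁, β₂, β) := by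
    unfold objA objB
    simp only
    rw [hlossAB]
    nlinarith [hlam.le, hpen]
  refine ⟨(μ + m₁ + m₂ + m, α₁, α₂, a, b, c), ⟨hs₁, hs₂, ha0, hb0, hcc, hcr⟩, hle, ?_⟩
  intro hge
  have heq := le_antisymm hge hle
  unfold objA objB at heq
  simp only at heq
  rw [hlossAB] at heq
  have hsum : norm2 β₁ + norm2 β₂ + norm2 β
      = norm2 α₁ + norm2 α₂
        + Real.sqrt ((L₂:ℝ) * ∑ i, a i ^ 2 + (L₁:ℝ) * ∑ j, b j ^ 2 + ∑ r, c r ^ 2) := by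
    have h' : lam * (norm2 β₁ + norm2 β₂ + norm2 β)
        = lam * (norm2 α₁ + norm2 α₂
          + Real.sqrt ((L₂:ℝ) * ∑ i, a i ^ 2 + (L₁:ℝ) * ∑ j, b j ^ 2 + ∑ r, c r ^ 2)) := by
      linarith
    exact mul_left_cancel₀ hlam.ne' h'
  have he₁ : norm2 β₁ = norm2 α₁ := by linarith
  have he₂ : norm2 β₂ = norm2 α₂ := by linarith
  have he₃ : norm2 β
      = Real.sqrt ((L₂:ℝ) * ∑ i, a i ^ 2 + (L₁:ℝ) * ∑ j, b j ^ 2 + ∑ r, c r ^ 2) := by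
    linarith
  have hm₁0 : m₁ = 0 := by
    have h := (Real.sqrt_inj (Finset.sum_nonneg fun i _ => sq_nonneg _) nn₁).mp he₁
    rw [hβ₁sq] at h
    have h0 : (L₁ : ℝ) * m₁ ^ 2 = 0 := by linarith
    rcases mul_eq_zero.mp h0 with h' | h'
    · exact absurd h' e₁
    · exact pow_eq_zero_iff (n := 2) (by norm_num) |>.mp h'
  have hm₂0 : m₂ = 0 := by
    have h := (Real.sqrt_inj (Finset.sum_nonneg fun j _ => sq_nonneg _) nn₂).mp he₂
    rw [hβ₂sq] at h
    have h0 : (L₂ : ℝ) * m₂ ^ 2 = 0 := by linarith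
    rcases mul_eq_zero.mp h0 with h' | h'
    · exact absurd h' e₂
    · exact pow_eq_zero_iff (n := 2) (by norm_num) |>.mp h'
  have hm0 : m = 0 := by
    have h := (Real.sqrt_inj (Finset.sum_nonneg fun r _ => sq_nonneg _) nn₃).mp he₃
    rw [hβsq] at h
    have h0 : (L₁ : ℝ) * (L₂ : ℝ) * m ^ 2 = 0 := by linarith
    rcases mul_eq_zero.mp h0 with h' | h'
    · exact absurd h' (mul_ne_zero e₁ e₂)
    · exact pow_eq_zero_iff (n := 2) (by norm_num) |>.mp h'
  unfold toA
  simp only [Prod.mk.injEq]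
  refine ⟨by rw [hm₁0, hm₂0, hm0]; ring, ?_, ?_, ?_⟩
  · funext i; simp only [hα₁, hm₁0]; ring
  · funext j; simp only [hα₂, hm₂0]; ring
  · funext r
    rw [Zmat1_mulVec, Zmat2_mulVec]
    simp only [hcdef, hm0]
    ring

/-- **Theorem 1.** The unconstrained group-lasso (A) and the constrained
overlapped group-lasso (B) are equivalent: their infima coincide, `toA` maps minimizers
of (B) to minimizers of (A), and every minimizer of (A) arises in this way. -/
theorem stmt_10 (n L₁ L₂ : ℕ) (hL₁ : 1 ≤ L₁) (hL₂ : 1 ≤ L₂)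
    (X₁ : Matrix (Fin n) (Fin L₁) ℝ)
    (hX₁ : ∀ k : Fin n, ∃ i : Fin L₁, ∀ j : Fin L₁, X₁ k j = if j = i then (1 : ℝ) else 0)
    (X₂ : Matrix (Fin n) (Fin L₂) ℝ)
    (hX₂ : ∀ k : Fin n, ∃ i : Fin L₂, ∀ j : Fin L₂, X₂ k j = if j = i then (1 : ℝ) else 0)
    (Y : Fin n → ℝ) (lam : ℝ) (hlam : 0 < lam) :
    (sInf (Set.range (objA X₁ X₂ Y lam))
        = sInf (objB X₁ X₂ Y lam '' {q | constraintsB q})) ∧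
    (∀ q, constraintsB q → (∀ q', constraintsB q' → objB X₁ X₂ Y lam q ≤ objB X₁ X₂ Y lam q') →
      ∀ p, objA X₁ X₂ Y lam (toA q) ≤ objA X₁ X₂ Y lam p) ∧
    (∀ p, (∀ p', objA X₁ X₂ Y lam p ≤ objA X₁ X₂ Y lam p') →
      ∃ q, constraintsB q ∧
        (∀ q', constraintsB q' → objB X₁ X₂ Y lam q ≤ objB X₁ X₂ Y lam q') ∧
        toA q = p) := by
  have hL₁p : 0 < L₁ := hL₁
  have hL₂p : 0 < L₂ := hL₂
  have hAnn : ∀ p, 0 ≤ objA X₁ X₂ Y lam p := by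
    intro p
    unfold objA norm2
    have h1 : (0:ℝ) ≤ ∑ k, (Y k - p.1 - X₁.mulVec p.2.1 k - X₂.mulVec p.2.2.1 k
        - (interact X₁ X₂).mulVec p.2.2.2 k) ^ 2 :=
      Finset.sum_nonneg fun k _ => sq_nonneg _
    have h2 := Real.sqrt_nonneg (∑ i, p.2.1 i ^ 2)
    have h3 := Real.sqrt_nonneg (∑ i, p.2.2.1 i ^ 2)
    have h4 := Real.sqrt_nonneg (∑ i, p.2.2.2 i ^ 2)
    nlinarith [hlam.le]
  have hBnn : ∀ q, 0 ≤ objB X₁ X₂ Y lam q := by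
    intro q
    unfold objB norm2
    have h1 : (0:ℝ) ≤ ∑ k, (Y k - q.1 - X₁.mulVec q.2.1 k - X₂.mulVec q.2.2.1 k
        - X₁.mulVec q.2.2.2.1 k - X₂.mulVec q.2.2.2.2.1 k
        - (interact X₁ X₂).mulVec q.2.2.2.2.2 k) ^ 2 :=
      Finset.sum_nonneg fun k _ => sq_nonneg _
    have h2 := Real.sqrt_nonneg (∑ i, q.2.1 i ^ 2)
    have h3 := Real.sqrt_nonneg (∑ i, q.2.2.1 i ^ 2)
    have h4 := Real.sqrt_nonneg ((L₂ : ℝ) * ∑ i, q.2.2.2.1 i ^ 2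
      + (L₁ : ℝ) * ∑ j, q.2.2.2.2.1 j ^ 2 + ∑ r, q.2.2.2.2.2 r ^ 2)
    nlinarith [hlam.le]
  have q0 : ℝ × (Fin L₁ → ℝ) × (Fin L₂ → ℝ) × (Fin L₁ → ℝ) × (Fin L₂ → ℝ)
      × (Fin L₁ × Fin L₂ → ℝ) :=
    (0, fun _ => 0, fun _ => 0, fun _ => 0, fun _ => 0, fun _ => 0)
  have hq0 : constraintsB (L₁ := L₁) (L₂ := L₂)
      (0, fun _ => 0, fun _ => 0, fun _ => 0, fun _ => 0, fun _ => 0) := by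
    refine ⟨by simp, by simp, by simp, by simp, fun j => by simp, fun i => by simp⟩
  have hBne : (objB X₁ X₂ Y lam '' {q | constraintsB q}).Nonempty :=
    ⟨_, ⟨(0, fun _ => 0, fun _ => 0, fun _ => 0, fun _ => 0, fun _ => 0), hq0, rfl⟩⟩
  have hAne : (Set.range (objA X₁ X₂ Y lam)).Nonempty :=
    ⟨_, ⟨(0, fun _ => 0, fun _ => 0, fun _ => 0), rfl⟩⟩
  have hAbdd : BddBelow (Set.range (objA X₁ X₂ Y lam)) := by
    refine ⟨0, ?_⟩
    rintro x ⟨p, rfl⟩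
    exact hAnn p
  have hBbdd : BddBelow (objB X₁ X₂ Y lam '' {q | constraintsB q}) := by
    refine ⟨0, ?_⟩
    rintro x ⟨q, _, rfl⟩
    exact hBnn q
  have hsub : objB X₁ X₂ Y lam '' {q | constraintsB q} ⊆ Set.range (objA X₁ X₂ Y lam) := by
    rintro x ⟨q, hq, rfl⟩
    exact ⟨toA q, objA_toA_eq X₁ hX₁ X₂ hX₂ Y lam q hq⟩
  refine ⟨?_, ?_, ?_⟩
  · apply le_antisymm
    · exact csInf_le_csInf hAbdd hBne hsub
    · apply le_csInf hAne
      rintro x ⟨p, rfl⟩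
      obtain ⟨q, hq, hle, -⟩ := exists_decomp hL₁p hL₂p X₁ hX₁ X₂ hX₂ Y lam hlam p
      exact le_trans (csInf_le hBbdd ⟨q, hq, rfl⟩) hle
  · intro q hq hmin p
    obtain ⟨q', hq', hle, -⟩ := exists_decomp hL₁p hL₂p X₁ hX₁ X₂ hX₂ Y lam hlam p
    calc objA X₁ X₂ Y lam (toA q) = objB X₁ X₂ Y lam q :=
          objA_toA_eq X₁ hX₁ X₂ hX₂ Y lam q hq
      _ ≤ objB X₁ X₂ Y lam q' := hmin q' hq'
      _ ≤ objA X₁ X₂ Y lam p := hle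
  · intro p hmin
    obtain ⟨q, hq, hle, hforce⟩ := exists_decomp hL₁p hL₂p X₁ hX₁ X₂ hX₂ Y lam hlam p
    have hge : objA X₁ X₂ Y lam p ≤ objB X₁ X₂ Y lam q := by
      have := hmin (toA q)
      rwa [objA_toA_eq X₁ hX₁ X₂ hX₂ Y lam q hq] at this
    refine ⟨q, hq, ?_, hforce hge⟩
    intro q' hq'
    calc objB X₁ X₂ Y lam q ≤ objA X₁ X₂ Y lam p := hle
      _ ≤ objA X₁ X₂ Y lam (toA q') := hmin (toA q')
      _ = objB X₁ X₂ Y lam q' := objA_toA_eq X₁ hX₁ X₂ hX₂ Y lam q' hq'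

end
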